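/- arXiv:2212.03591 — 5 statements merged into one kernel-verified Lean document; each statement's English description precedes it below -/
import Mathlib

section
/- Let G be a locally profinite group with an open compact pro-p subgroup, R a Z[1/p]-algebra, H ≤ G a closed subgroup, and K ≤ G an open compact pro-p subgroup. Let (g_j)_{j∈J} be a set of representatives for the double cosets K\G/H. Then there is an isomorphism of smooth R[H]-modules C_c^∞(K\G, R) ≅ ⊕_{j∈J} C_c^∞((g_j^{-1} K g_j ∩ H)\H, R), where H acts by right translation on both sides. -/
/-- Let `G` be locally profinite, `R` a `ℤ[1/p]`-algebra, `H ≤ G` a closed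
subgroup, `K ≤ G` an open compact pro-`p` subgroup, and `(g_j)_{j ∈ J}` a set of
representatives for the double cosets `K\G/H`.  Then the map
`f ↦ (j ↦ (h ↦ f (g_j h)))` defines an isomorphism of smooth `R[H]`-modules (for the right
translation actions) `C_c^∞(K\G, R) ≅ ⊕_{j ∈ J} C_c^∞((g_j⁻¹ K g_j ∩ H)\H, R)`. -/
theorem stmt1 (p : ℕ) (hp : p.Prime)
    (R : Type*) [CommRing R] (hpu : IsUnit (p : R))
    (G : Type*) [Group G] [TopologicalSpace G] [IsTopologicalGroup G]
    (K : Subgroup G) (hKopen : IsOpen (K : Set G)) (hKcpt : IsCompact (K : Set G))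
    (hKpro : ∀ U : Subgroup G, U ≤ K → IsOpen (U : Set G) → ∃ n : ℕ, U.relIndex K = p ^ n)
    (H : Subgroup G) (hH : IsClosed (H : Set G))
    (J : Type*) (gj : J → G)
    -- `(g_j)` is a system of representatives for `K\G/H`:
    (hrep : ∀ g : G, ∃! j : J, ∃ k ∈ K, ∃ h ∈ H, g = k * gj j * h) :
    ∃ Φ : (G → R) → (J → (↥H → R)),
      -- `R`-linearity:
      (∀ f f' : G → R, Φ (f + f') = Φ f + Φ f') ∧
      (∀ (r : R) (f : G → R), Φ (r • f) = r • Φ f) ∧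
      -- `H`-equivariance for right translation:
      (∀ (h₀ : ↥H) (f : G → R),
        Φ (fun g => f (g * (h₀ : G))) = fun j u => Φ f j (u * h₀)) ∧
      -- bijection from `C_c^∞(K\G, R)` onto the direct sum:
      Set.BijOn Φ
        {f : G → R | (∀ k ∈ K, ∀ g : G, f (k * g) = f g) ∧
          IsLocallyConstant f ∧ HasCompactSupport f}
        {F : J → (↥H → R) |
          (∀ j : J, (∀ u h : ↥H, (gj j) * (u : G) * (gj j)⁻¹ ∈ K → F j (u * h) = F j h) ∧
            IsLocallyConstant (F j) ∧ HasCompactSupport (F j)) ∧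
          {j : J | F j ≠ 0}.Finite} := by
    classical
  -- the double coset `K * gj j * H` as a set, and its basic properties
  set U : J → Set G := fun j => {g | ∃ k ∈ K, ∃ h ∈ H, g = k * gj j * h} with hU
  have hUopen : ∀ j, IsOpen (U j) := by
    intro j
    have : U j = ⋃ h ∈ (H : Set G), (fun x : G => x * (h⁻¹ * (gj j)⁻¹)) ⁻¹' (K : Set G) := by
      ext x
      simp only [hU, Set.mem_setOf_eq, Set.mem_iUnion, Set.mem_preimage, SetLike.mem_coe]
      constructor
      · rintro ⟨k, hk, h, hh, rfl⟩
        exact ⟨h, hh, by group; simpa using hk⟩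
      · rintro ⟨h, hh, hx⟩
        exact ⟨x * (h⁻¹ * (gj j)⁻¹), hx, h, hh, by group⟩
    rw [this]
    exact isOpen_biUnion fun h _ => hKopen.preimage (continuous_mul_right _)
  have hUmem : ∀ j (k : G), k ∈ K → ∀ h : ↥H, k * gj j * (h : G) ∈ U j :=
    fun j k hk h => ⟨k, hk, h, h.2, rfl⟩
  have hUuniq : ∀ j j' g, g ∈ U j → g ∈ U j' → j = j' := by
    intro j j' g hj hj'
    obtain ⟨j₀, -, hun⟩ := hrep g
    rw [hun j hj, hun j' hj']
  refine ⟨fun f j h => f (gj j * h), fun f f' => rfl, fun r f => rfl, ?_, ?_, ?_, ?_⟩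
  · intro h₀ f
    funext j u
    simp [mul_assoc]
  -- MapsTo
  · intro f hf
    obtain ⟨hKinv, hlc, hcs⟩ := hf
    have hlcj : ∀ j : J, IsLocallyConstant fun h : ↥H => f (gj j * h) := fun j =>
      hlc.comp_continuous (continuous_const.mul continuous_subtype_val)
    refine ⟨fun j => ⟨?_, hlcj j, ?_⟩, ?_⟩
    · intro u h hu
      have := hKinv _ hu (gj j * h)
      calc f (gj j * ((u * h : ↥H) : G)) = f ((gj j * (u : G) * (gj j)⁻¹) * (gj j * h)) := by
            push_cast; group
        _ = f (gj j * h) := this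
    · -- compact support of the j-component
      have hemb : Topology.IsClosedEmbedding (fun h : ↥H => gj j * (h : G)) :=
        (Homeomorph.mulLeft (gj j)).isClosedEmbedding.comp hH.isClosedEmbedding_subtypeVal
      have hcpt : IsCompact ((fun h : ↥H => gj j * (h : G)) ⁻¹' tsupport f) :=
        hemb.isCompact_preimage hcs
      have hclosed : IsClosed (Function.support fun h : ↥H => f (gj j * h)) := by
        rw [← isOpen_compl_iff]
        have := (hlcj j) {(0 : R)}
        convert this using 1
        ext x
        simp [Function.mem_support]
      rw [HasCompactSupport, tsupport, hclosed.closure_eq]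
      exact IsCompact.of_isClosed_subset hcpt hclosed
        (fun h hh => subset_closure hh)
    · -- finiteness of the set of nonzero components
      have hcover : tsupport f ⊆ ⋃ j, U j := by
        intro g _
        obtain ⟨j, hj, -⟩ := hrep g
        exact Set.mem_iUnion.2 ⟨j, hj⟩
      obtain ⟨T, hT⟩ := hcs.elim_finite_subcover U hUopen hcover
      refine Set.Finite.subset T.finite_toSet ?_
      intro j hj
      have : ∃ h : ↥H, f (gj j * h) ≠ 0 := by
        by_contra hc
        push_neg at hc
        exact hj (funext hc)
      obtain ⟨h, hfh⟩ := this
      have hmem : gj j * (h : G) ∈ tsupport f := subset_closure hfh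
      obtain ⟨i, hiT, hgi⟩ := Set.mem_iUnion₂.1 (hT hmem)
      have : gj j * (h : G) ∈ U j := by
        have := hUmem j 1 K.one_mem h
        simpa using this
      rwa [hUuniq j i _ this hgi]
  -- InjOn
  · intro f hf f' hf' heq
    funext g
    obtain ⟨j, ⟨k, hk, h, hh, rfl⟩, -⟩ := hrep g
    have h1 := hf.1 k hk (gj j * h)
    have h2 := hf'.1 k hk (gj j * h)
    rw [mul_assoc, h1, h2]
    exact congrFun (congrFun heq j) ⟨h, hh⟩
  -- SurjOn
  · intro F hF
    obtain ⟨hFmem, hSfin⟩ := hF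
    -- choose coset data
    choose jj kk hkk hh hhH hgh using fun g : G => (hrep g).exists
    set f : G → R := fun g => F (jj g) ⟨hh g, hhH g⟩ with hfdef
    -- well-definedness
    have key : ∀ j (h₁ h₂ : ↥H) (k₁ k₂ : G), k₁ ∈ K → k₂ ∈ K →
        k₁ * gj j * (h₁ : G) = k₂ * gj j * (h₂ : G) → F j h₁ = F j h₂ := by
      intro j h₁ h₂ k₁ k₂ hk₁ hk₂ heq
      have hu : gj j * ((h₁ * h₂⁻¹ : ↥H) : G) * (gj j)⁻¹ ∈ K := by
        have h3 : (h₁ : G) = (gj j)⁻¹ * k₁⁻¹ * (k₂ * gj j * (h₂ : G)) := by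
          rw [← heq]; group
        have : gj j * ((h₁ : G) * (h₂ : G)⁻¹) * (gj j)⁻¹ = k₁⁻¹ * k₂ := by
          rw [h3]; group
        push_cast
        rw [this]
        exact K.mul_mem (K.inv_mem hk₁) hk₂
      have := (hFmem j).1 (h₁ * h₂⁻¹) h₂ hu
      simpa using this
    have eval : ∀ j (k : G), k ∈ K → ∀ h₀ : ↥H, f (k * gj j * (h₀ : G)) = F j h₀ := by
      intro j k hk h₀
      set g := k * gj j * (h₀ : G) with hg
      have hje : jj g = j := hUuniq (jj g) j g ⟨kk g, hkk g, hh g, hhH g, hgh g⟩ ⟨k, hk, h₀, h₀.2, rfl⟩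
      have e := hgh g
      rw [hje] at e
      have := key j ⟨hh g, hhH g⟩ h₀ (kk g) k (hkk g) hk (e.symm.trans hg)
      calc f g = F (jj g) ⟨hh g, hhH g⟩ := rfl
        _ = F j ⟨hh g, hhH g⟩ := by rw [hje]
        _ = F j h₀ := this
    have hfK : ∀ k ∈ K, ∀ g : G, f (k * g) = f g := by
      intro k₀ hk₀ g
      have e1 : f g = F (jj g) ⟨hh g, hhH g⟩ := rfl
      have e2 : k₀ * g = (k₀ * kk g) * gj (jj g) * hh g := by
        conv_lhs => rw [hgh g]
        group
      rw [e2, e1]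
      exact eval (jj g) (k₀ * kk g) (K.mul_mem hk₀ (hkk g)) ⟨hh g, hhH g⟩
    have hflc : IsLocallyConstant f := by
      rw [IsLocallyConstant.iff_exists_open]
      intro g
      set j := jj g with hj
      have hV : IsOpen ((F j) ⁻¹' {F j ⟨hh g, hhH g⟩}) := (hFmem j).2.1 _
      obtain ⟨W, hWopen, hWV⟩ := isOpen_induced_iff.1 hV
      refine ⟨⋃ h' ∈ {h : ↥H | (h : G) ∈ W}, (fun x : G => x * ((h' : G)⁻¹ * (gj j)⁻¹)) ⁻¹' (K : Set G),
        isOpen_biUnion fun _ _ => hKopen.preimage (continuous_mul_right _), ?_, ?_⟩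
      · refine Set.mem_iUnion₂.2 ⟨⟨hh g, hhH g⟩, ?_, ?_⟩
        · show hh g ∈ W
          have : (⟨hh g, hhH g⟩ : ↥H) ∈ Subtype.val ⁻¹' W := by
            rw [hWV]; exact rfl
          exact this
        · show g * ((hh g)⁻¹ * (gj j)⁻¹) ∈ (K : Set G)
          have he : g * ((hh g)⁻¹ * (gj j)⁻¹) = kk g := by
            nth_rewrite 1 [hgh g]
            rw [hj]; group
          rw [he]; exact hkk g
      · intro y hy
        obtain ⟨h', hh', hk'⟩ := Set.mem_iUnion₂.1 hy
        have hy' : y = (y * ((h' : G)⁻¹ * (gj j)⁻¹)) * gj j * (h' : G) := by group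
        have e1 : f y = F j h' := by rw [hy']; exact eval j _ hk' h'
        have e2 : F j h' = F j ⟨hh g, hhH g⟩ := by
          have : h' ∈ Subtype.val ⁻¹' W := hh'
          rw [hWV] at this
          exact this
        have e3 : f g = F j ⟨hh g, hhH g⟩ := rfl
        rw [e1, e2, e3]
    have hfcs : HasCompactSupport f := by
      have hC : IsCompact (⋃ j ∈ {j | F j ≠ 0}, (fun q : G × ↥H => q.1 * gj j * (q.2 : G)) ''
          ((K : Set G) ×ˢ tsupport (F j))) := by
        refine hSfin.isCompact_biUnion fun j _ => ?_
        exact (hKcpt.prod (hFmem j).2.2).image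
          ((continuous_fst.mul continuous_const).mul (continuous_subtype_val.comp continuous_snd))
      have hsub : Function.support f ⊆ ⋃ j ∈ {j | F j ≠ 0}, (fun q : G × ↥H => q.1 * gj j * (q.2 : G)) ''
          ((K : Set G) ×ˢ tsupport (F j)) := by
        intro g hg
        have hne : F (jj g) ⟨hh g, hhH g⟩ ≠ 0 := hg
        refine Set.mem_biUnion (show jj g ∈ {j | F j ≠ 0} from ?_) ?_
        · intro h0; rw [h0] at hne; exact hne rfl
        · exact ⟨(kk g, ⟨hh g, hhH g⟩), ⟨hkk g, subset_closure hne⟩, (hgh g).symm⟩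
      have hclosed : IsClosed (Function.support f) := by
        rw [← isOpen_compl_iff]
        have := hflc {(0 : R)}
        convert this using 1
        ext x
        simp [Function.mem_support]
      rw [HasCompactSupport, tsupport, hclosed.closure_eq]
      exact IsCompact.of_isClosed_subset hC hclosed hsub
    refine ⟨f, ⟨hfK, hflc, hfcs⟩, ?_⟩
    funext j u
    have : f (gj j * (u : G)) = F j u := by
      have := eval j 1 K.one_mem u
      rwa [one_mul] at this
    exact this
end

section
/- Let R be a Noetherian commutative ring, G a locally profinite group with open compact pro-p subgroups, and let V, W be smooth R[G]-modules such that V is finitely generated as an R[G]-module and W is admissible. Then the coinvariant module V ⊗_{R[G]} W is a finitely generated R-module. -/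
/-- The submodule of vectors fixed by a set `s` of group elements under a representation. -/
def fixedSubmodule {R G V : Type*} [CommRing R] [Group G] [AddCommGroup V] [Module R V]
    (ρ : Representation R G V) (s : Set G) : Submodule R V where
  carrier := {v | ∀ k ∈ s, ρ k v = v}
  add_mem' := by
    intro a b ha hb k hk
    rw [map_add, ha k hk, hb k hk]
  zero_mem' := by
    intro k _
    exact map_zero _
  smul_mem' := by
    intro c v hv k hk
    rw [map_smul, hv k hk]

/-- Let `R` be Noetherian, `G` locally profinite with an open compact pro-`p`
subgroup (`p` invertible in `R`), `V` a smooth `R[G]`-module which is finitely generated as an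
`R[G]`-module, and `W` an admissible smooth `R[G]`-module.  Then the coinvariants
`V ⊗_{R[G]} W` form a finitely generated `R`-module.  (The coinvariants are encoded via their
universal property: any `R`-module `Q` spanned by the image of a `G`-invariant bilinear map
`V × W → Q` is a quotient of `V ⊗_{R[G]} W`, and `V ⊗_{R[G]} W` itself is such a `Q`; the
conclusion asserts finite generation of every such `Q`.) -/
theorem stmt4 (p : ℕ) (hp : p.Prime)
    (R : Type*) [CommRing R] [IsNoetherianRing R] (hpu : IsUnit (p : R))
    (G : Type*) [Group G] [TopologicalSpace G] [IsTopologicalGroup G]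
    (hG : ∃ K : Subgroup G, IsOpen (K : Set G) ∧ IsCompact (K : Set G) ∧
      ∀ U : Subgroup G, U ≤ K → IsOpen (U : Set G) → ∃ n : ℕ, U.relIndex K = p ^ n)
    (V : Type*) [AddCommGroup V] [Module R V] (ρ : Representation R G V)
    (W : Type*) [AddCommGroup W] [Module R W] (σ : Representation R G W)
    (hVsm : ∀ v : V, ∃ K : Subgroup G, IsOpen (K : Set G) ∧ IsCompact (K : Set G) ∧
      ∀ k ∈ K, ρ k v = v)
    (hWsm : ∀ w : W, ∃ K : Subgroup G, IsOpen (K : Set G) ∧ IsCompact (K : Set G) ∧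
      ∀ k ∈ K, σ k w = w)
    -- `V` is finitely generated as an `R[G]`-module:
    (hVfg : ∃ S : Finset V,
      Submodule.span R {v : V | ∃ (g : G), ∃ s ∈ S, v = ρ g s} = ⊤)
    -- `W` is admissible: for each open compact `K ≤ G` the invariants `W^K` are f.g. over `R`:
    (hWadm : ∀ K : Subgroup G, IsOpen (K : Set G) → IsCompact (K : Set G) →
      (fixedSubmodule σ (K : Set G)).FG)
    (Q : Type*) [AddCommGroup Q] [Module R Q]
    (b : V →ₗ[R] W →ₗ[R] Q)
    (hinv : ∀ (g : G) (v : V) (w : W), b (ρ g v) (σ g w) = b v w)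
    (hspan : Submodule.span R {q : Q | ∃ (v : V) (w : W), q = b v w} = ⊤) :
    Module.Finite R Q := by
  classical
  obtain ⟨K₀, hK₀o, hK₀c, hK₀p⟩ := hG
  obtain ⟨S, hS⟩ := hVfg
  choose Ks hKso hKsc hKsfix using hVsm
  -- the open compact subgroup `K ≤ K₀` fixing all generators of `V`
  have hinfopen : ∀ T : Finset V, IsOpen ((T.inf Ks : Subgroup G) : Set G) := by
    intro T
    induction T using Finset.induction_on with
    | empty => simp only [Finset.inf_empty, Subgroup.coe_top]; exact isOpen_univ
    | insert _ _ h ih =>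
        rw [Finset.inf_insert, Subgroup.coe_inf]
        exact (hKso _).inter ih
  set K : Subgroup G := K₀ ⊓ S.inf Ks with hKdef
  have hKleK₀ : K ≤ K₀ := inf_le_left
  have hKo : IsOpen (K : Set G) := by
    rw [hKdef, Subgroup.coe_inf]; exact hK₀o.inter (hinfopen S)
  have hKc : IsCompact (K : Set G) := by
    refine hK₀c.of_isClosed_subset (Subgroup.isClosed_of_isOpen K hKo) ?_
    exact hKleK₀
  have hKfix : ∀ s ∈ S, ∀ k ∈ K, ρ k s = s := by
    intro s hs k hk
    exact hKsfix s k (SetLike.le_def.mp (Finset.inf_le hs) hk.2)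
  -- finite generators of `W^K`
  obtain ⟨F, hF⟩ := hWadm K hKo hKc
  -- the candidate finite generating set of `Q`
  set T : Finset Q := (S ×ˢ F).image (fun x => b x.1 x.2) with hTdef
  -- key claim: `b s w ∈ span T` for every generator `s ∈ S` and every `w : W`
  have keyA : ∀ s ∈ S, ∀ w : W, b s w ∈ Submodule.span R (T : Set Q) := by
    intro s hs w
    obtain ⟨Kw, hKwo, hKwc, hKwfix⟩ := hWsm w
    set K' : Subgroup G := K ⊓ Kw with hK'def
    have hK'leK : K' ≤ K := inf_le_left
    have hK'o : IsOpen (K' : Set G) := by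
      rw [hK'def, Subgroup.coe_inf]; exact hKo.inter hKwo
    obtain ⟨n, hn⟩ := hK₀p K' (le_trans hK'leK hKleK₀) hK'o
    obtain ⟨m, hm⟩ := hK₀p K hKleK₀ hKo
    have hmul : K'.relIndex K * K.relIndex K₀ = K'.relIndex K₀ :=
      Subgroup.relIndex_mul_relIndex K' K K₀ hK'leK hKleK₀
    have hdvd : K'.relIndex K ∣ p ^ n := by
      rw [← hn, ← hmul]; exact Dvd.intro _ rfl
    obtain ⟨a, -, hdpow⟩ := (Nat.dvd_prime_pow hp).mp hdvd
    have hdne : K'.relIndex K ≠ 0 := by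
      rw [hdpow]; exact pow_ne_zero _ hp.pos.ne'
    set H : Subgroup K := K'.subgroupOf K with hHdef
    have hcard : Nat.card (K ⧸ H) = K'.relIndex K := rfl
    have : Finite (K ⧸ H) := Nat.finite_of_card_ne_zero (by rw [hcard]; exact hdne)
    have : Fintype (K ⧸ H) := Fintype.ofFinite _
    -- multiplying by an element of `Kw` on the right does not change `σ g w`
    have keymul : ∀ (g₁ g₂ : G), g₂ ∈ Kw → σ (g₁ * g₂) w = σ g₁ w := by
      intro g₁ g₂ hg₂
      rw [map_mul, Module.End.mul_apply, hKwfix g₂ hg₂]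
    -- the well-defined function on cosets
    set f : K ⧸ H → W := fun c => Quotient.liftOn' c (fun k : K => σ (k : G) w)
      (by
        intro x y hxy
        have hx : ((x⁻¹ * y : K) : G) ∈ K' :=
          Subgroup.mem_subgroupOf.mp (QuotientGroup.leftRel_apply.mp hxy)
        have hx' : ((x : G)⁻¹ * (y : G)) ∈ K' := by simpa using hx
        have h2 : σ ((x : G) * ((x : G)⁻¹ * (y : G))) w = σ (x : G) w :=
          keymul _ _ hx'.2
        rw [mul_inv_cancel_left] at h2
        exact h2.symm) with hfdef
    have hfmk : ∀ k : K, f (QuotientGroup.mk k) = σ (k : G) w := fun k => rfl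
    set w' : W := ∑ c : K ⧸ H, f c with hw'def
    -- `w'` is fixed by `K`
    have hw'fix : w' ∈ fixedSubmodule σ (K : Set G) := by
      intro k₀ hk₀
      rw [hw'def, map_sum]
      have hterm : ∀ c : K ⧸ H, σ k₀ (f c) = f ((⟨k₀, hk₀⟩ : K) • c) := by
        intro c
        induction c using Quotient.inductionOn' with
        | h k =>
            show σ k₀ (f (QuotientGroup.mk k)) = f (QuotientGroup.mk ((⟨k₀, hk₀⟩ : K) * k))
            rw [hfmk, hfmk]
            rw [← Module.End.mul_apply, ← map_mul]
            rfl
      calc ∑ c : K ⧸ H, σ k₀ (f c) = ∑ c : K ⧸ H, f ((⟨k₀, hk₀⟩ : K) • c) := by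
              simp only [hterm]
        _ = ∑ c : K ⧸ H, f c := Equiv.sum_comp (MulAction.toPerm (⟨k₀, hk₀⟩ : K)) f
    -- `b s w' = (relIndex) • b s w`
    have hbsw' : b s w' = (K'.relIndex K) • b s w := by
      rw [hw'def, map_sum]
      have hterm : ∀ c : K ⧸ H, b s (f c) = b s w := by
        intro c
        induction c using Quotient.inductionOn' with
        | h k =>
            show b s (f (QuotientGroup.mk k)) = b s w
            rw [hfmk]
            conv_lhs => rw [← hKfix s hs (k : G) k.2]
            exact hinv (k : G) s w
      rw [Finset.sum_congr rfl (fun c _ => hterm c), Finset.sum_const, Finset.card_univ,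
        ← Nat.card_eq_fintype_card, hcard]
    -- `b s w'` lies in the span of `T`
    have hbw'T : b s w' ∈ Submodule.span R (T : Set Q) := by
      have hw'span : w' ∈ Submodule.span R (F : Set W) := by rw [hF]; exact hw'fix
      have : b s w' ∈ Submodule.map (b s) (Submodule.span R (F : Set W)) :=
        Submodule.mem_map_of_mem hw'span
      rw [Submodule.map_span] at this
      refine Submodule.span_mono ?_ this
      rintro q ⟨x, hx, rfl⟩
      exact Finset.mem_coe.mpr (Finset.mem_image.mpr ⟨(s, x), Finset.mem_product.mpr ⟨hs, hx⟩, rfl⟩)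
    -- invert the unit `p ^ a` to conclude
    have hu : IsUnit ((K'.relIndex K : R)) := by
      rw [hdpow]; push_cast; exact hpu.pow a
    obtain ⟨u, hu⟩ := hu
    have heq : b s w' = (u : R) • b s w := by
      rw [hbsw', hu, Nat.cast_smul_eq_nsmul]
    have : b s w = ((u⁻¹ : Rˣ) : R) • b s w' := by
      rw [heq, smul_smul, Units.inv_mul, one_smul]
    rw [this]
    exact Submodule.smul_mem _ _ hbw'T
  -- now show the span of `T` is everything
  have hT : Submodule.span R (T : Set Q) = ⊤ := by
    rw [eq_top_iff, ← hspan, Submodule.span_le]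
    rintro q ⟨v, w, rfl⟩
    have hv : v ∈ Submodule.span R {v : V | ∃ (g : G), ∃ s ∈ S, v = ρ g s} := by
      rw [hS]; trivial
    induction hv using Submodule.span_induction with
    | mem x hx =>
        obtain ⟨g, s, hs, rfl⟩ := hx
        have : b (ρ g s) w = b s (σ g⁻¹ w) := by
          conv_lhs => rw [show w = σ g (σ g⁻¹ w) by
            rw [← Module.End.mul_apply, ← map_mul, mul_inv_cancel, map_one,
              Module.End.one_apply]]
          exact hinv g s (σ g⁻¹ w)
        rw [this]
        exact keyA s hs _
    | zero => simp only [map_zero, LinearMap.zero_apply]; exact Submodule.zero_mem _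
    | add x y _ _ hx hy =>
        rw [map_add, LinearMap.add_apply]; exact Submodule.add_mem _ hx hy
    | smul r x _ hx =>
        rw [map_smul, LinearMap.smul_apply]; exact Submodule.smul_mem _ r hx
  exact ⟨⟨T, hT⟩⟩
end

section
/- Let n = n_1 + n_2 with n_1, n_2 ≥ 1, and let λ : n = λ_1 + ⋯ + λ_k be an ordered partition of n with λ ≠ (n) and λ ≠ (n_1, n_2). Let Sp_m denote the m-dimensional Weil–Deligne representation with r(Art(x)) e_i = |x|^{(m+1−2i)/2} e_i and N e_i = e_{i−1}, and let ρ = rec(π_{n_1,n_2}) be the n-dimensional Weil–Deligne representation which is the direct sum of Sp_{n_1}(|·|^{(n+1)/2−(n_1+1)/2}) and Sp_{n_2}(|·|^{(n+1)/2−n_1−(n_2+1)/2}). Then there exists an ordered list of characters χ_1 ⊗ ⋯ ⊗ χ_n occurring in the Jacquet module of π_λ such that there is no increasing filtration 0 ⊂ Fil_1 ⊂ ⋯ ⊂ Fil_n = C^n by Weil–Deligne subrepresentations of ρ with Fil_i/Fil_{i−1} ≅ C(χ_i) for each i. -/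
/-- The (additively encoded) Frobenius-semisimple part of `rec(π_{n₁,n₂})`: the diagonal
operator on `ℂ^n` with eigenvalue the exponent `(n-1)/2 - j` on the `j`-th basis vector
(the Weil group acts on the `j`-th line through the character `|·|^{(n-1)/2 - j}`, and
a line or subspace is Weil-stable iff it is stable under this diagonal operator). -/
noncomputable def Dop (n : ℕ) : (Fin n → ℂ) →ₗ[ℂ] (Fin n → ℂ) where
  toFun f := fun j => ((((n : ℂ) - 1) / 2) - ((j : ℕ) : ℂ)) * f j
  map_add' f g := by funext j; simp [mul_add]
  map_smul' c f := by funext j; simp; ring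

/-- The monodromy operator `N` of `rec(π_{n₁,n₂}) = Sp_{n₁}(…) ⊕ Sp_{n₂}(…)`:
`N e_j = e_{j-1}` within each of the two Jordan blocks `{0,…,n₁-1}`, `{n₁,…,n-1}`
(so `N e_0 = N e_{n₁} = 0`). -/
noncomputable def Nop (n n1 : ℕ) : (Fin n → ℂ) →ₗ[ℂ] (Fin n → ℂ) where
  toFun f := fun j =>
    if h : (j : ℕ) + 1 < n then (if (j : ℕ) + 1 = n1 then 0 else f ⟨(j : ℕ) + 1, h⟩) else 0
  map_add' f g := by funext j; dsimp; split_ifs <;> simp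
  map_smul' c f := by funext j; dsimp; split_ifs <;> simp

lemma Dop_apply (n : ℕ) (f : Fin n → ℂ) (j : Fin n) :
    Dop n f j = ((((n : ℂ) - 1) / 2) - ((j : ℕ) : ℂ)) * f j := rfl

lemma Nop_apply (n n1 : ℕ) (f : Fin n → ℂ) (j : Fin n) :
    Nop n n1 f j =
      if h : (j : ℕ) + 1 < n then (if (j : ℕ) + 1 = n1 then 0 else f ⟨(j : ℕ) + 1, h⟩) else 0 :=
  rfl

lemma no_filt_bot (n n1 : ℕ) (hn : 0 < n) (χ : Fin n → ℂ) (j0 : Fin n)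
    (hχ : χ ⟨0, hn⟩ = (((n : ℂ) - 1) / 2) - ((j0 : ℕ) : ℂ))
    (hj0 : (j0 : ℕ) ≠ 0) (hj0' : (j0 : ℕ) ≠ n1) :
    ¬ ∃ Fil : Fin (n + 1) → Submodule ℂ (Fin n → ℂ),
        Monotone Fil ∧ Fil 0 = ⊥ ∧ Fil (Fin.last n) = ⊤ ∧
        (∀ i : Fin (n + 1), Module.finrank ℂ ↥(Fil i) = (i : ℕ)) ∧
        (∀ (i : Fin n) (v : Fin n → ℂ), v ∈ Fil i.succ →
          (Dop n v - χ i • v ∈ Fil i.castSucc ∧ Nop n n1 v ∈ Fil i.castSucc)) := by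
  rintro ⟨Fil, -, h0, -, hrank, hstep⟩
  set i0 : Fin n := ⟨0, hn⟩ with hi0
  have hne : Fil i0.succ ≠ ⊥ := by
    intro hb
    have := hrank i0.succ
    rw [hb] at this
    simp [finrank_bot] at this
  obtain ⟨v, hv, hvne⟩ := (Fil i0.succ).ne_bot_iff.mp hne
  obtain ⟨hD, hN⟩ := hstep i0 v hv
  have hc : i0.castSucc = 0 := by ext; simp [hi0]
  rw [hc, h0, Submodule.mem_bot, sub_eq_zero] at hD
  rw [hc, h0, Submodule.mem_bot] at hN
  -- coordinates other than j0 vanish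
  have hcoord : ∀ j : Fin n, j ≠ j0 → v j = 0 := by
    intro j hj
    have h1 := congrFun hD j
    rw [Dop_apply] at h1
    simp only [Pi.smul_apply, smul_eq_mul, hχ] at h1
    have h2 : (((j0 : ℕ) : ℂ) - ((j : ℕ) : ℂ)) * v j = 0 := by linear_combination h1
    rcases mul_eq_zero.mp h2 with h | h
    · exfalso
      apply hj
      have : ((j0 : ℕ) : ℂ) = ((j : ℕ) : ℂ) := by linear_combination h
      exact (Fin.ext (Nat.cast_injective this)).symm
    · exact h
  have hvj0 : v j0 ≠ 0 := by
    intro hz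
    apply hvne
    funext j
    by_cases hj : j = j0
    · simp [hj, hz]
    · simp [hcoord j hj]
  -- evaluate N at j0 - 1
  have hlt : (j0 : ℕ) - 1 < n := by omega
  have := congrFun hN ⟨(j0 : ℕ) - 1, hlt⟩
  rw [Nop_apply] at this
  have e1 : ((j0 : ℕ) - 1) + 1 = (j0 : ℕ) := by omega
  simp only [e1] at this
  rw [dif_pos j0.isLt, if_neg hj0'] at this
  simp only [Pi.zero_apply, Fin.eta] at this
  exact hvj0 this

lemma no_filt_top (n n1 : ℕ) (hn : 0 < n) (χ : Fin n → ℂ) (j1 : Fin n)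
    (hχ : χ ⟨n - 1, by omega⟩ = (((n : ℂ) - 1) / 2) - ((j1 : ℕ) : ℂ))
    (hj1 : (j1 : ℕ) + 1 ≠ n1) (hj1' : (j1 : ℕ) ≠ n - 1) :
    ¬ ∃ Fil : Fin (n + 1) → Submodule ℂ (Fin n → ℂ),
        Monotone Fil ∧ Fil 0 = ⊥ ∧ Fil (Fin.last n) = ⊤ ∧
        (∀ i : Fin (n + 1), Module.finrank ℂ ↥(Fil i) = (i : ℕ)) ∧
        (∀ (i : Fin n) (v : Fin n → ℂ), v ∈ Fil i.succ →
          (Dop n v - χ i • v ∈ Fil i.castSucc ∧ Nop n n1 v ∈ Fil i.castSucc)) := by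
  rintro ⟨Fil, -, -, htop, hrank, hstep⟩
  set iL : Fin n := ⟨n - 1, by omega⟩ with hiL
  have hsucc : iL.succ = Fin.last n := by
    ext
    simp [Fin.succ, Fin.last, hiL]
    omega
  set W : Submodule ℂ (Fin n → ℂ) := Fil iL.castSucc with hW
  have hmem : ∀ v : Fin n → ℂ, Dop n v - χ iL • v ∈ W ∧ Nop n n1 v ∈ W := by
    intro v
    exact hstep iL v (by rw [hsucc, htop]; trivial)
  -- all standard basis vectors with index ≠ j1 lie in W (via D)
  have hD : ∀ j : Fin n, j ≠ j1 → Pi.single j (1 : ℂ) ∈ W := by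
    intro j hj
    have h1 := (hmem (Pi.single j 1)).1
    have e : Dop n (Pi.single j (1 : ℂ)) - χ iL • (Pi.single j (1 : ℂ) : Fin n → ℂ)
        = (((j1 : ℕ) : ℂ) - ((j : ℕ) : ℂ)) • (Pi.single j (1 : ℂ) : Fin n → ℂ) := by
      funext j'
      simp only [Pi.sub_apply, Dop_apply, Pi.smul_apply, smul_eq_mul, hχ, hiL]
      by_cases hjj : j' = j
      · subst hjj; rw [← hiL, hχ]; ring
      · simp [Pi.single_apply, Ne.symm hjj]
    rw [e] at h1
    have hne : (((j1 : ℕ) : ℂ) - ((j : ℕ) : ℂ)) ≠ 0 := by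
      intro hz
      apply hj
      exact (Fin.ext (Nat.cast_injective (by linear_combination hz))).symm
    have := W.smul_mem (((j1 : ℕ) : ℂ) - ((j : ℕ) : ℂ))⁻¹ h1
    rwa [smul_smul, inv_mul_cancel₀ hne, one_smul] at this
  -- the remaining basis vector lies in W (via N)
  have hlt : (j1 : ℕ) + 1 < n := by have := j1.isLt; omega
  have hN : Pi.single j1 (1 : ℂ) ∈ W := by
    have h1 := (hmem (Pi.single (⟨(j1 : ℕ) + 1, hlt⟩ : Fin n) 1)).2
    have e : Nop n n1 (Pi.single (⟨(j1 : ℕ) + 1, hlt⟩ : Fin n) (1 : ℂ))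
        = Pi.single j1 (1 : ℂ) := by
      funext j'
      rw [Nop_apply]
      by_cases hj' : (j' : ℕ) + 1 < n
      · rw [dif_pos hj']
        by_cases hjj : j' = j1
        · subst hjj
          rw [if_neg hj1]
          simp [Pi.single_apply]
        · have hne2 : ((j' : ℕ) + 1 : ℕ) ≠ ((j1 : ℕ) + 1 : ℕ) := by
            intro h; apply hjj; exact Fin.ext (by omega)
          by_cases hn1 : (j' : ℕ) + 1 = n1
          · rw [if_pos hn1]
            simp [Pi.single_apply, Ne.symm hjj]
          · rw [if_neg hn1]
            have hfin : (⟨(j' : ℕ) + 1, hj'⟩ : Fin n) ≠ ⟨(j1 : ℕ) + 1, hlt⟩ :=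
              fun h => hne2 (congrArg Fin.val h)
            simp [Pi.single_apply, hfin, hjj]
      · rw [dif_neg hj']
        have : j' ≠ j1 := by intro h; subst h; exact hj' hlt
        simp [Pi.single_apply, Ne.symm this]
    rw [e] at h1
    exact h1
  -- hence W = ⊤, contradicting its rank n - 1
  have hWtop : W = ⊤ := by
    rw [eq_top_iff, ← (Pi.basisFun ℂ (Fin n)).span_eq, Submodule.span_le]
    rintro x ⟨i, rfl⟩
    rw [Pi.basisFun_apply]
    by_cases hi : i = j1
    · subst hi; exact hN
    · exact hD i hi
  have h1 := hrank iL.castSucc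
  rw [← hW, hWtop] at h1
  rw [finrank_top, Module.finrank_fin_fun] at h1
  have h2 : ((iL.castSucc : Fin (n+1)) : ℕ) = n - 1 := rfl
  omega

/-- Partial sums of an ordered partition: `Psum lam t = λ_0 + ⋯ + λ_{t-1}`. -/
def Psum {k : ℕ} (lam : Fin k → ℕ) (t : ℕ) : ℕ :=
  ∑ s ∈ Finset.univ.filter (fun s : Fin k => (s : ℕ) < t), lam s

lemma Psum_zero {k : ℕ} (lam : Fin k → ℕ) : Psum lam 0 = 0 := by simp [Psum]

lemma Psum_succ {k : ℕ} (lam : Fin k → ℕ) {t : ℕ} (ht : t < k) :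
    Psum lam (t + 1) = Psum lam t + lam ⟨t, ht⟩ := by
  unfold Psum
  have h : Finset.univ.filter (fun s : Fin k => (s : ℕ) < t + 1)
      = insert (⟨t, ht⟩ : Fin k) (Finset.univ.filter (fun s : Fin k => (s : ℕ) < t)) := by
    ext s
    simp [Fin.ext_iff]
    omega
  rw [h, Finset.sum_insert (by simp)]
  exact add_comm _ _

lemma Psum_mono {k : ℕ} (lam : Fin k → ℕ) : Monotone (Psum lam) := by
  intro a b hab
  apply Finset.sum_le_sum_of_subset
  intro s
  simp only [Finset.mem_filter, Finset.mem_univ, true_and]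
  omega

lemma Psum_of_ge {k : ℕ} (lam : Fin k → ℕ) {t : ℕ} (ht : k ≤ t) :
    Psum lam t = ∑ s, lam s := by
  unfold Psum
  congr 1
  ext s
  simp only [Finset.mem_filter, Finset.mem_univ, true_and, iff_true]
  exact lt_of_lt_of_le s.isLt ht

lemma Psum_le {k : ℕ} (lam : Fin k → ℕ) (t : ℕ) : Psum lam t ≤ ∑ s, lam s :=
  Finset.sum_le_sum_of_subset (Finset.filter_subset _ _)

lemma Psum_lt {k : ℕ} (lam : Fin k → ℕ) (hpos : ∀ t, 0 < lam t) {t : ℕ} (ht : t < k) :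
    Psum lam t < Psum lam (t + 1) := by
  rw [Psum_succ lam ht]
  have := hpos ⟨t, ht⟩
  omega

lemma Psum_lt_of_lt {k : ℕ} (lam : Fin k → ℕ) (hpos : ∀ t, 0 < lam t) {t u : ℕ}
    (htu : t < u) (hu : u ≤ k) : Psum lam t < Psum lam u := by
  have h1 : Psum lam t ≤ Psum lam (u - 1) := Psum_mono lam (by omega)
  have h2 : Psum lam (u - 1) < Psum lam (u - 1 + 1) := Psum_lt lam hpos (by omega)
  rw [Nat.sub_add_cancel (by omega)] at h2
  omega

lemma Psum_eq_sum_le {k : ℕ} (lam : Fin k → ℕ) (t : Fin k) :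
    ∑ s ∈ Finset.univ.filter (· ≤ t), lam s = Psum lam ((t : ℕ) + 1) := by
  unfold Psum
  congr 1
  ext s
  simp only [Finset.mem_filter, Finset.mem_univ, true_and]
  rw [Fin.le_def]
  omega

/-- Index of the block of the partition containing the value `v`. -/
def bIdx {k : ℕ} (lam : Fin k → ℕ) (v : ℕ) : ℕ :=
  Nat.findGreatest (fun t => Psum lam t ≤ v) k

lemma bIdx_spec {k : ℕ} (lam : Fin k → ℕ) {v : ℕ} (hv : v < ∑ s, lam s) :
    Psum lam (bIdx lam v) ≤ v ∧ v < Psum lam (bIdx lam v + 1) ∧ bIdx lam v < k := by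
  have h1 : Psum lam (bIdx lam v) ≤ v :=
    Nat.findGreatest_spec (P := fun t => Psum lam t ≤ v) (Nat.zero_le k)
      (by show Psum lam 0 ≤ v; rw [Psum_zero]; exact Nat.zero_le v)
  have hle : bIdx lam v ≤ k := Nat.findGreatest_le k
  have h3 : bIdx lam v < k := by
    rcases Nat.lt_or_ge (bIdx lam v) k with h | h
    · exact h
    · exfalso
      rw [Psum_of_ge lam h] at h1
      omega
  refine ⟨h1, ?_, h3⟩
  by_contra hcon
  push_neg at hcon
  have h5 := Nat.le_findGreatest (P := fun t => Psum lam t ≤ v)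
    (by omega : bIdx lam v + 1 ≤ k) hcon
  have h4 : Nat.findGreatest (fun t => Psum lam t ≤ v) k = bIdx lam v := rfl
  rw [h4] at h5
  omega

lemma bIdx_eq {k : ℕ} (lam : Fin k → ℕ) {v t : ℕ} (hv : v < ∑ s, lam s)
    (h1 : Psum lam t ≤ v) (h2 : v < Psum lam (t + 1)) : bIdx lam v = t := by
  obtain ⟨hb1, hb2, hb3⟩ := bIdx_spec lam hv
  rcases lt_trichotomy (bIdx lam v) t with h | h | h
  · exfalso
    have : Psum lam (bIdx lam v + 1) ≤ Psum lam t := Psum_mono lam (by omega)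
    omega
  · exact h
  · exfalso
    have : Psum lam (t + 1) ≤ Psum lam (bIdx lam v) := Psum_mono lam (by omega)
    omega

/-- The position map: block `t` of values is sent (in order) to the contiguous range
of positions `[n - Psum (t+1), n - Psum t)`, so blocks appear in reverse order. -/
def posFun {k n : ℕ} (lam : Fin k → ℕ) (hsum : ∑ t, lam t = n) (v : Fin n) : Fin n :=
  ⟨n - Psum lam (bIdx lam (v : ℕ) + 1) + ((v : ℕ) - Psum lam (bIdx lam (v : ℕ))), by
    obtain ⟨h1, h2, h3⟩ := bIdx_spec lam (by rw [hsum]; exact v.isLt)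
    have h4 : Psum lam (bIdx lam (v : ℕ) + 1) ≤ n := by
      have := Psum_le lam (bIdx lam (v : ℕ) + 1)
      omega
    omega⟩

lemma posFun_val {k n : ℕ} (lam : Fin k → ℕ) (hsum : ∑ t, lam t = n) (v : Fin n) :
    (posFun lam hsum v : ℕ)
      = n - Psum lam (bIdx lam (v : ℕ) + 1) + ((v : ℕ) - Psum lam (bIdx lam (v : ℕ))) := rfl

lemma posFun_injective {k n : ℕ} (lam : Fin k → ℕ) (hsum : ∑ t, lam t = n) :
    Function.Injective (posFun lam hsum) := by
  intro v w hvw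
  have hvw' : (posFun lam hsum v : ℕ) = (posFun lam hsum w : ℕ) := congrArg Fin.val hvw
  obtain ⟨hv1, hv2, hv3⟩ := bIdx_spec lam (v := (v : ℕ)) (by rw [hsum]; exact v.isLt)
  obtain ⟨hw1, hw2, hw3⟩ := bIdx_spec lam (v := (w : ℕ)) (by rw [hsum]; exact w.isLt)
  have hv4 : Psum lam (bIdx lam (v : ℕ) + 1) ≤ n := by
    have := Psum_le lam (bIdx lam (v : ℕ) + 1); omega
  have hw4 : Psum lam (bIdx lam (w : ℕ) + 1) ≤ n := by
    have := Psum_le lam (bIdx lam (w : ℕ) + 1); omega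
  simp only [posFun_val] at hvw'
  rcases lt_trichotomy (bIdx lam (v : ℕ)) (bIdx lam (w : ℕ)) with h | h | h
  · exfalso
    have : Psum lam (bIdx lam (v : ℕ) + 1) ≤ Psum lam (bIdx lam (w : ℕ)) :=
      Psum_mono lam (by omega)
    omega
  · rw [h] at hvw' hv1 hv2
    exact Fin.ext (by omega)
  · exfalso
    have : Psum lam (bIdx lam (w : ℕ) + 1) ≤ Psum lam (bIdx lam (v : ℕ)) :=
      Psum_mono lam (by omega)
    omega

set_option maxHeartbeats 1000000 in
/-- Let `n = n₁ + n₂` with `n₁, n₂ ≥ 1` and let `λ = (λ_1, …, λ_k)` be an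
ordered partition of `n` with `λ ≠ (n)` and `λ ≠ (n₁, n₂)`.  Then there is an ordered list
of characters `χ_1 ⊗ ⋯ ⊗ χ_n` (encoded by their exponents `χ_i = (n-1)/2 - τ(i)` for a
permutation `τ` satisfying the descent condition describing the Jacquet module of `π_λ`)
such that there is NO increasing filtration `0 ⊂ Fil_1 ⊂ ⋯ ⊂ Fil_n = ℂ^n` by
Weil–Deligne subrepresentations of `ρ = rec(π_{n₁,n₂})` (i.e. subspaces stable under the
semisimple part `D` and the monodromy `N`) with `Fil_i/Fil_{i-1} ≅ ℂ(χ_i)` for all `i`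
(i.e. `dim Fil_i = i`, `D` acts on the `i`-th graded piece by the scalar `χ_i`, and `N`
acts on it by `0`). -/
theorem stmt8 (n n1 n2 k : ℕ) (hn1 : 0 < n1) (hn2 : 0 < n2) (hn : n = n1 + n2)
    (lam : Fin k → ℕ) (hpos : ∀ t, 0 < lam t) (hsum : ∑ t, lam t = n)
    (hk1 : k ≠ 1)
    (hk2 : ¬ ∃ h : k = 2,
      lam (Fin.cast h.symm 0) = n1 ∧ lam (Fin.cast h.symm 1) = n2) :
    ∃ χ : Fin n → ℂ,
      -- `χ` occurs in the Jacquet module `r_{B_n}(π_λ)`: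
      (∃ τ : Equiv.Perm (Fin n),
        (∀ i : Fin n, χ i = (((n : ℂ) - 1) / 2) - (((τ i : ℕ) : ℂ))) ∧
        ∀ (i : Fin n) (h : (i : ℕ) + 1 < n),
          (τ.symm i < τ.symm ⟨(i : ℕ) + 1, h⟩ ↔
            ∀ t : Fin k, (∑ s ∈ Finset.univ.filter (· ≤ t), lam s) ≠ (i : ℕ) + 1)) ∧
      -- and no filtration of `rec(π_{n₁,n₂})` has graded pieces `ℂ(χ_1), …, ℂ(χ_n)`:
      ¬ ∃ Fil : Fin (n + 1) → Submodule ℂ (Fin n → ℂ),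
          Monotone Fil ∧ Fil 0 = ⊥ ∧ Fil (Fin.last n) = ⊤ ∧
          (∀ i : Fin (n + 1), Module.finrank ℂ ↥(Fil i) = (i : ℕ)) ∧
          (∀ (i : Fin n) (v : Fin n → ℂ), v ∈ Fil i.succ →
            (Dop n v - χ i • v ∈ Fil i.castSucc ∧ Nop n n1 v ∈ Fil i.castSucc)) := by
  have hn0 : 0 < n := by omega
  have hkk : 2 ≤ k := by
    by_contra hcon
    push_neg at hcon
    interval_cases k
    · simp at hsum
      omega
    · exact hk1 rfl
  have hk0' : 0 < k := by omega
  have hsumlt : ∀ v : Fin n, (v : ℕ) < ∑ s, lam s := by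
    intro v; rw [hsum]; exact v.isLt
  -- the permutation
  have hinj := posFun_injective lam hsum
  let σ : Equiv.Perm (Fin n) := Equiv.ofBijective _ (Finite.injective_iff_bijective.mp hinj)
  have hσ : ∀ v, σ v = posFun lam hsum v := fun v => rfl
  have hPn : ∀ t : ℕ, k ≤ t → Psum lam t = n := by
    intro t ht; rw [Psum_of_ge lam ht, hsum]
  -- key special values of the inverse permutation
  have hP1 : Psum lam 1 = lam ⟨0, hk0'⟩ := by
    rw [show (1 : ℕ) = 0 + 1 from rfl, Psum_succ lam hk0', Psum_zero, zero_add]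
  have hPk1lt : Psum lam (k - 1) < n := by
    have h1 := Psum_lt lam hpos (show k - 1 < k by omega)
    rw [Nat.sub_add_cancel (by omega), hPn k le_rfl] at h1
    exact h1
  have hPk1pos : 0 < Psum lam (k - 1) := by
    have h1 : Psum lam 1 ≤ Psum lam (k - 1) := Psum_mono lam (by omega)
    have h2 := hpos ⟨0, hk0'⟩
    omega
  set v0 : Fin n := ⟨Psum lam (k - 1), hPk1lt⟩ with hv0
  have hσv0 : σ v0 = ⟨0, hn0⟩ := by
    have hb : bIdx lam (v0 : ℕ) = k - 1 :=
      bIdx_eq lam (hsumlt v0) (le_of_eq rfl)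
        (by rw [Nat.sub_add_cancel (by omega), hPn k le_rfl]; exact hPk1lt)
    apply Fin.ext
    rw [hσ, posFun_val, hb, Nat.sub_add_cancel (by omega), hPn k le_rfl]
    have hval0 : (v0 : ℕ) = Psum lam (k - 1) := rfl
    have h00 : ((⟨0, hn0⟩ : Fin n) : ℕ) = 0 := rfl
    rw [hval0, h00]
    omega
  have hlam0n : lam ⟨0, hk0'⟩ ≤ Psum lam (k - 1) := by
    rw [← hP1]; exact Psum_mono lam (by omega)
  have hlam0pos := hpos ⟨0, hk0'⟩
  set v1 : Fin n := ⟨lam ⟨0, hk0'⟩ - 1, by omega⟩ with hv1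
  have hval1 : (v1 : ℕ) = lam ⟨0, hk0'⟩ - 1 := rfl
  have hσv1 : σ v1 = ⟨n - 1, by omega⟩ := by
    have hb : bIdx lam (v1 : ℕ) = 0 :=
      bIdx_eq lam (hsumlt v1) (by rw [Psum_zero]; exact Nat.zero_le _)
        (by rw [zero_add, hP1, hval1]; omega)
    apply Fin.ext
    rw [hσ, posFun_val, hb, zero_add, hP1, Psum_zero]
    have h00 : ((⟨n - 1, by omega⟩ : Fin n) : ℕ) = n - 1 := rfl
    rw [hval1, h00]
    have := hPk1lt
    omega
  refine ⟨fun i => (((n : ℂ) - 1) / 2) - (((σ.symm i : ℕ) : ℂ)), ⟨σ.symm, fun i => rfl, ?_⟩, ?_⟩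
  · -- the descent condition
    intro i h
    simp only [Equiv.symm_symm, Psum_eq_sum_le]
    obtain ⟨hb1, hb2, hb3⟩ := bIdx_spec lam (hsumlt i)
    by_cases hex : ∃ t : Fin k, Psum lam ((t : ℕ) + 1) = (i : ℕ) + 1
    · obtain ⟨t0, ht0⟩ := hex
      refine iff_of_false ?_ (by push_neg; exact ⟨t0, ht0⟩)
      -- here the position decreases
      have ht0k : (t0 : ℕ) < k := t0.isLt
      have hstep0 : Psum lam (t0 : ℕ) < Psum lam ((t0 : ℕ) + 1) := Psum_lt lam hpos ht0k
      have hbi : bIdx lam (i : ℕ) = (t0 : ℕ) :=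
        bIdx_eq lam (hsumlt i) (by omega) (by omega)
      have ht1k : (t0 : ℕ) + 1 < k := by
        by_contra hcon
        push_neg at hcon
        rw [hPn _ hcon] at ht0
        omega
      have hstep1 : Psum lam ((t0 : ℕ) + 1) < Psum lam ((t0 : ℕ) + 1 + 1) := Psum_lt lam hpos ht1k
      have hbi1 : bIdx lam ((i : ℕ) + 1) = (t0 : ℕ) + 1 :=
        bIdx_eq lam (by rw [hsum]; omega) (by omega) (by omega)
      intro hlt
      have hc : ((⟨(i : ℕ) + 1, h⟩ : Fin n) : ℕ) = (i : ℕ) + 1 := rfl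
      rw [Fin.lt_def, hσ, hσ, posFun_val, posFun_val, hc, hbi, hbi1] at hlt
      have hle2 : Psum lam ((t0 : ℕ) + 1 + 1) ≤ n := by
        have := Psum_le lam ((t0 : ℕ) + 1 + 1); omega
      omega
    · push_neg at hex
      refine iff_of_true ?_ hex
      have hne : Psum lam (bIdx lam (i : ℕ) + 1) ≠ (i : ℕ) + 1 := hex ⟨bIdx lam (i : ℕ), hb3⟩
      have hbi1 : bIdx lam ((i : ℕ) + 1) = bIdx lam (i : ℕ) :=
        bIdx_eq lam (by rw [hsum]; omega) (by omega) (by omega)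
      have hc : ((⟨(i : ℕ) + 1, h⟩ : Fin n) : ℕ) = (i : ℕ) + 1 := rfl
      rw [Fin.lt_def, hσ, hσ, posFun_val, posFun_val, hc, hbi1]
      have hle2 : Psum lam (bIdx lam (i : ℕ) + 1) ≤ n := by
        have := Psum_le lam (bIdx lam (i : ℕ) + 1); omega
      omega
  · -- no filtration exists
    by_cases hcase : Psum lam (k - 1) = n1
    · -- top obstruction with j1 = v1
      have hlam0ne : lam ⟨0, hk0'⟩ ≠ n1 := by
        intro he
        rcases Nat.lt_or_ge 1 (k - 1) with hlt | hge
        · have := Psum_lt_of_lt lam hpos hlt (by omega)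
          rw [hP1, he, hcase] at this
          omega
        · have hkeq : k = 2 := by omega
          apply hk2
          subst hkeq
          refine ⟨rfl, ?_, ?_⟩
          · exact he
          · show lam 1 = n2
            rw [Fin.sum_univ_two] at hsum
            have he' : lam 0 = n1 := he
            omega
      apply no_filt_top n n1 hn0 _ v1
      · rw [← hσv1, Equiv.symm_apply_apply]
      · show (v1 : ℕ) + 1 ≠ n1
        have : (v1 : ℕ) + 1 = lam ⟨0, hk0'⟩ := by omega
        rw [this]
        exact hlam0ne
      · show (v1 : ℕ) ≠ n - 1
        have : lam ⟨0, hk0'⟩ ≤ n1 := by omega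
        omega
    · -- bottom obstruction with j0 = v0
      apply no_filt_bot n n1 hn0 _ v0
      · rw [← hσv0, Equiv.symm_apply_apply]
      · show (v0 : ℕ) ≠ 0
        have hval0 : (v0 : ℕ) = Psum lam (k - 1) := rfl
        omega
      · exact hcase
end

section
/- Let F be a CM number field with maximal totally real subfield F^+ and nontrivial automorphism c ∈ Gal(F/F^+). Let v_0 be a finite place of F^+ that splits in F, with corresponding pair of places w̃_0 ≠ w̃_0^c of F. If β ∈ O_F generates a positive power of the prime ideal of w̃_0, then the image of β/β^c in the quotient of (O_F ⊗_Z Z_p)^× by the closure of the image of O_F^× has infinite order. -/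
open NumberField

/-- In a CM extension, every complex embedding intertwines `c` with complex conjugation. -/
lemma conj_eq_comp_c (Fplus F : Type*) [Field Fplus] [Field F] [NumberField Fplus] [NumberField F]
    [Algebra Fplus F] (hdeg : Module.finrank Fplus F = 2)
    (htr : ∀ v : InfinitePlace Fplus, v.IsReal)
    (hti : ∀ w : InfinitePlace F, w.IsComplex)
    (c : F ≃ₐ[Fplus] F) (hc : c ≠ AlgEquiv.refl)
    (φ : F →+* ℂ) (x : F) : (starRingEnd ℂ) (φ x) = φ (c x) := by
  classical
  haveI : FiniteDimensional Fplus F := Module.finite_of_finrank_eq_succ hdeg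
  letI : Algebra Fplus ℂ := (φ.comp (algebraMap Fplus F)).toAlgebra
  have hreal : ∀ y : Fplus, (starRingEnd ℂ) (φ (algebraMap Fplus F y)) = φ (algebraMap Fplus F y) := by
    intro y
    have h1 := htr (InfinitePlace.mk (φ.comp (algebraMap Fplus F)))
    rw [InfinitePlace.isReal_mk_iff, ComplexEmbedding.isReal_iff] at h1
    exact RingHom.congr_fun h1 y
  let Φ : F →ₐ[Fplus] ℂ := { toRingHom := φ, commutes' := fun y => rfl }
  let Ψ : F →ₐ[Fplus] ℂ :=
    { toRingHom := (starRingEnd ℂ).comp φ, commutes' := fun y => hreal y }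
  let Φc : F →ₐ[Fplus] ℂ := Φ.comp c.toAlgHom
  have hcard : Fintype.card (F →ₐ[Fplus] ℂ) = 2 := by
    rw [AlgHom.card]; exact hdeg
  have hΦΦc : Φ ≠ Φc := by
    obtain ⟨a, ha⟩ : ∃ a, c a ≠ a := by
      by_contra h
      push_neg at h
      exact hc (AlgEquiv.ext h)
    intro h
    exact ha (φ.injective (congrFun (congrArg (fun f => f.toFun) h) a)).symm
  have hΨΦ : Ψ ≠ Φ := by
    intro h
    have hreal2 : ComplexEmbedding.IsReal φ := by
      rw [ComplexEmbedding.isReal_iff]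
      ext y
      exact congrFun (congrArg (fun f => f.toFun) h) y
    have := hti (InfinitePlace.mk φ)
    rw [InfinitePlace.isComplex_mk_iff] at this
    exact this hreal2
  have hmain : Ψ = Φc := by
    by_contra hne
    have h3 : ({Φ, Φc, Ψ} : Finset (F →ₐ[Fplus] ℂ)).card = 3 := by
      rw [Finset.card_insert_of_notMem
          (by simp only [Finset.mem_insert, Finset.mem_singleton]; push_neg
              exact ⟨hΦΦc, fun h => hΨΦ h.symm⟩),
        Finset.card_insert_of_notMem
          (by simp only [Finset.mem_singleton]; exact fun h => hne h.symm),
        Finset.card_singleton]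
    have := Finset.card_le_univ ({Φ, Φc, Ψ} : Finset (F →ₐ[Fplus] ℂ))
    rw [h3, hcard] at this
    omega
  exact congrFun (congrArg (fun f => f.toFun) hmain) x

/-- Polynomial identity used in the main proof. -/
lemma poly_id {R : Type*} [CommRing R] (P Q Um X Y : R)
    (hX : X = P - Um * Q) (hY : Y = P - Um * Um * P) :
    P * (P ^ 2 - Q ^ 2) = ((P + Um * Q) * P) * X - Q ^ 2 * Y := by
  subst hX hY; ring

/-- Let `F/F⁺` be a CM quadratic extension of number fields with complex
conjugation `c`, and let `w₀` be a prime of `F`, prime to `p`, with `w₀^c ≠ w₀` (i.e. the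
place of `F⁺` below it splits in `F`).  If `β ∈ 𝓞_F` generates a positive power of `w₀`,
then the image of `β/β^c` in `(𝓞_F ⊗ ℤ_p)^× / closure(𝓞_F^×)` has infinite order; concretely,
for every `N ≥ 1` there is a `p`-adic precision `k` such that `β^N` is not congruent to
`u · (β^c)^N` modulo `p^k 𝓞_F` for any global unit `u`. -/
theorem stmt9 (p : ℕ) [Fact p.Prime]
    (Fplus F : Type*) [Field Fplus] [Field F] [NumberField Fplus] [NumberField F]
    [Algebra Fplus F] (hdeg : Module.finrank Fplus F = 2)
    -- `F⁺` is totally real and `F` is totally imaginary (so `F` is CM):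
    (htr : ∀ v : InfinitePlace Fplus, v.IsReal)
    (hti : ∀ w : InfinitePlace F, w.IsComplex)
    -- complex conjugation:
    (c : F ≃ₐ[Fplus] F) (hc : c ≠ AlgEquiv.refl) (hcc : ∀ x, c (c x) = x)
    (w0 : Ideal (𝓞 F)) (hw0 : w0.IsMaximal)
    (hsplit : Ideal.comap (RingOfIntegers.mapRingHom (c : F ≃ₐ[Fplus] F)) w0 ≠ w0)
    (hwp : (p : 𝓞 F) ∉ w0)
    (β : 𝓞 F) (e : ℕ) (he : 0 < e) (hβ : Ideal.span {β} = w0 ^ e) :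
    ∀ N : ℕ, 0 < N → ∃ k : ℕ, ∀ u : (𝓞 F)ˣ,
      β ^ N - (u : 𝓞 F) * (RingOfIntegers.mapRingHom (c : F ≃ₐ[Fplus] F) β) ^ N ∉
        Ideal.span {(p : 𝓞 F) ^ k} := by
  intro N hN
  by_contra hcon
  push_neg at hcon
  set σ : 𝓞 F →+* 𝓞 F := RingOfIntegers.mapRingHom (c : F ≃ₐ[Fplus] F) with hσdef
  -- basic facts about σ
  have hσval : ∀ x : 𝓞 F, algebraMap (𝓞 F) F (σ x) = c (algebraMap (𝓞 F) F x) := fun x => rfl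
  have hσσ : ∀ x : 𝓞 F, σ (σ x) = x := by
    intro x
    apply RingOfIntegers.ext
    exact hcc _
  have hσinj : Function.Injective σ := Function.LeftInverse.injective hσσ
  have hσsurj : Function.Surjective σ := fun y => ⟨σ y, hσσ y⟩
  -- conjugation fact
  have hconj : ∀ (φ : F →+* ℂ) (x : F), (starRingEnd ℂ) (φ x) = φ (c x) :=
    conj_eq_comp_c Fplus F hdeg htr hti c hc
  -- the uniform torsion exponent
  haveI : Fintype (NumberField.Units.torsion F) := Fintype.ofFinite _
  set m : ℕ := Fintype.card (NumberField.Units.torsion F) with hmdef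
  have hm : 0 < m := Fintype.card_pos
  -- key unit fact : σ(u)^m = u^m
  have hupow : ∀ u : (𝓞 F)ˣ, (σ (u : 𝓞 F)) ^ m = ((u : 𝓞 F)) ^ m := by
    intro u
    have hunit : IsUnit (σ (u : 𝓞 F)) := u.isUnit.map σ
    set v : (𝓞 F)ˣ := hunit.unit with hvdef
    have hv : (v : 𝓞 F) = σ (u : 𝓞 F) := hunit.unit_spec
    have htor : u * v⁻¹ ∈ NumberField.Units.torsion F := by
      rw [NumberField.Units.mem_torsion]
      intro w
      rw [← InfinitePlace.norm_embedding_eq]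
      set φ := w.embedding with hφdef
      have hval : algebraMap (𝓞 F) F ((u * v⁻¹ : (𝓞 F)ˣ) : 𝓞 F)
          = algebraMap (𝓞 F) F (u : 𝓞 F) * algebraMap (𝓞 F) F ((v⁻¹ : (𝓞 F)ˣ) : 𝓞 F) := by
        rw [Units.val_mul, map_mul]
      have hvv : algebraMap (𝓞 F) F (v : 𝓞 F) * algebraMap (𝓞 F) F ((v⁻¹ : (𝓞 F)ˣ) : 𝓞 F) = 1 := by
        have := congrArg (algebraMap (𝓞 F) F) v.mul_inv
        rwa [map_mul, map_one] at this
      have hnz : φ (algebraMap (𝓞 F) F (u : 𝓞 F)) ≠ 0 := by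
        intro h
        have h1 : algebraMap (𝓞 F) F (u : 𝓞 F) = 0 := φ.injective (by simpa using h)
        have h2 : (u : 𝓞 F) = 0 := by
          have := IsFractionRing.injective (𝓞 F) F
          exact this (by rw [h1]; simp)
        exact u.ne_zero h2
      have hcu : ‖φ (algebraMap (𝓞 F) F (v : 𝓞 F))‖ = ‖φ (algebraMap (𝓞 F) F (u : 𝓞 F))‖ := by
        rw [hv, hσval, ← hconj φ]
        simp
      have h2 : ‖φ (algebraMap (𝓞 F) F (v : 𝓞 F))‖
          * ‖φ (algebraMap (𝓞 F) F ((v⁻¹ : (𝓞 F)ˣ) : 𝓞 F))‖ = 1 := by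
        rw [← norm_mul, ← map_mul, hvv, map_one, norm_one]
      rw [hval, map_mul, norm_mul]
      rw [hcu] at h2
      exact h2
    have hpow1 : (u * v⁻¹) ^ m = 1 := by
      have h5 : (⟨u * v⁻¹, htor⟩ : NumberField.Units.torsion F) ^ m = 1 := pow_card_eq_one
      simpa using congrArg (Subtype.val) h5
    have h3 : u ^ m = v ^ m := by
      rw [mul_pow, inv_pow] at hpow1
      exact (mul_inv_eq_one.mp hpow1)
    have h4 := congrArg (Units.val) h3
    rw [Units.val_pow_eq_pow_val, Units.val_pow_eq_pow_val, hv] at h4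
    exact h4.symm
  -- the key element lies in every power of (p)
  have hkey : ∀ k : ℕ, ((β ^ N) ^ m) * (((β ^ N) ^ m) ^ 2 - (((σ β) ^ N) ^ m) ^ 2)
      ∈ Ideal.span {(p : 𝓞 F)} ^ k := by
    intro k
    obtain ⟨u, hu⟩ := hcon k
    rw [← Ideal.span_singleton_pow] at hu
    set I : Ideal (𝓞 F) := Ideal.span {(p : 𝓞 F)} ^ k with hIdef
    have hD1 : β ^ N - (u : 𝓞 F) * (σ β) ^ N ∈ I := hu
    have hIσ : ∀ x, x ∈ I → σ x ∈ I := by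
      intro x hx
      rw [hIdef, Ideal.span_singleton_pow, Ideal.mem_span_singleton] at hx ⊢
      obtain ⟨d, hd⟩ := hx
      exact ⟨σ d, by rw [hd, map_mul, map_pow, map_natCast]⟩
    have hD2 : (σ β) ^ N - σ (u : 𝓞 F) * β ^ N ∈ I := by
      have h6 := hIσ _ hD1
      rw [map_sub, map_mul, map_pow, map_pow, hσσ] at h6
      exact h6
    have hX : (β ^ N) ^ m - (u : 𝓞 F) ^ m * ((σ β) ^ N) ^ m ∈ I := by
      obtain ⟨s, hs⟩ := sub_dvd_pow_sub_pow (β ^ N) ((u : 𝓞 F) * (σ β) ^ N) m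
      have h7 : (β ^ N) ^ m - (u : 𝓞 F) ^ m * ((σ β) ^ N) ^ m
          = (β ^ N - (u : 𝓞 F) * (σ β) ^ N) * s := by
        rw [← hs, mul_pow]
      rw [h7]
      exact Ideal.mul_mem_right _ _ hD1
    have hY : (β ^ N) ^ m - (u : 𝓞 F) ^ m * (u : 𝓞 F) ^ m * (β ^ N) ^ m ∈ I := by
      have hmem : β ^ N - ((u : 𝓞 F) * σ (u : 𝓞 F)) * β ^ N ∈ I := by
        have hid : β ^ N - ((u : 𝓞 F) * σ (u : 𝓞 F)) * β ^ N
            = (β ^ N - (u : 𝓞 F) * (σ β) ^ N)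
              + (u : 𝓞 F) * ((σ β) ^ N - σ (u : 𝓞 F) * β ^ N) := by ring
        rw [hid]
        exact Ideal.add_mem _ hD1 (Ideal.mul_mem_left _ _ hD2)
      obtain ⟨s, hs⟩ := sub_dvd_pow_sub_pow (β ^ N) (((u : 𝓞 F) * σ (u : 𝓞 F)) * β ^ N) m
      have h7 : (β ^ N) ^ m - (u : 𝓞 F) ^ m * (u : 𝓞 F) ^ m * (β ^ N) ^ m
          = (β ^ N - ((u : 𝓞 F) * σ (u : 𝓞 F)) * β ^ N) * s := by
        rw [← hs, mul_pow, mul_pow, hupow u]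
        try ring
      rw [h7]
      exact Ideal.mul_mem_right _ _ hmem
    rw [poly_id ((β ^ N) ^ m) (((σ β) ^ N) ^ m) ((u : 𝓞 F) ^ m) _ _ rfl rfl]
    exact Ideal.sub_mem _ (Ideal.mul_mem_left _ _ hX) (Ideal.mul_mem_left _ _ hY)
  -- (p) is a proper ideal
  have hptop : Ideal.span {(p : 𝓞 F)} ≠ ⊤ := by
    rw [Ne, Ideal.span_singleton_eq_top]
    intro hunit
    have h8 := NumberField.isUnit_iff_norm.mp hunit
    have h9 : ((RingOfIntegers.norm ℚ ((p : 𝓞 F)) : ℚ))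
        = Algebra.norm ℚ (((p : 𝓞 F) : F)) := rfl
    rw [h9] at h8
    have h10 : ((p : 𝓞 F) : F) = algebraMap ℚ F ((p : ℕ) : ℚ) := by
      push_cast
      simp
    rw [h10, Algebra.norm_algebraMap] at h8
    have hd : 0 < Module.finrank ℚ F := Module.finrank_pos
    have hp1 : (1 : ℚ) < ((p : ℕ) : ℚ) := by
      exact_mod_cast (Fact.out : p.Prime).one_lt
    have h16 : (1 : ℚ) < ((p : ℕ) : ℚ) ^ Module.finrank ℚ F :=
      one_lt_pow₀ hp1 hd.ne'
    rw [abs_of_pos (by positivity)] at h8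
    rw [h8] at h16
    exact lt_irrefl _ h16
  -- Krull intersection: the key element is zero
  have hγ0 : ((β ^ N) ^ m) * (((β ^ N) ^ m) ^ 2 - (((σ β) ^ N) ^ m) ^ 2) = 0 := by
    have h11 : ((β ^ N) ^ m) * (((β ^ N) ^ m) ^ 2 - (((σ β) ^ N) ^ m) ^ 2)
        ∈ (⊥ : Ideal (𝓞 F)) := by
      rw [← Ideal.iInf_pow_eq_bot_of_isDomain (Ideal.span {(p : 𝓞 F)}) hptop]
      exact (Submodule.mem_iInf _).mpr hkey
    simpa using h11
  -- β is nonzero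
  have hβ0 : β ≠ 0 := by
    intro h
    rw [h] at hβ
    have h12 : w0 ^ e = ⊥ := by
      rw [← hβ]
      simp
    have h13 : w0 ≤ ⊥ := by
      haveI : (⊥ : Ideal (𝓞 F)).IsPrime := Ideal.bot_prime
      exact (Ideal.IsPrime.pow_le_iff he.ne').mp (le_of_eq h12)
    have h14 : w0 = ⊥ := le_bot_iff.mp h13
    apply hsplit
    rw [h14]
    ext x
    simp only [Ideal.mem_comap, Ideal.mem_bot]
    exact ⟨fun hx => hσinj (by simpa using hx), fun hx => by rw [hx]; simp⟩
  have hPne : ((β ^ N) ^ m) ≠ 0 := pow_ne_zero _ (pow_ne_zero _ hβ0)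
  have hPQ : ((β ^ N) ^ m) ^ 2 = (((σ β) ^ N) ^ m) ^ 2 := by
    rcases mul_eq_zero.mp hγ0 with h | h
    · exact absurd h hPne
    · exact sub_eq_zero.mp h
  -- element equality at a positive exponent
  have heq : β ^ (N * m * 2) = (σ β) ^ (N * m * 2) := by
    simp only [pow_mul]
    exact hPQ
  -- ideal-theoretic contradiction
  have hspan : Ideal.span {β} ^ (N * m * 2) = Ideal.span {σ β} ^ (N * m * 2) := by
    rw [Ideal.span_singleton_pow, Ideal.span_singleton_pow, heq]
  have h15 : Ideal.span {σ β} = (Ideal.map σ w0) ^ e := by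
    rw [show Ideal.span {σ β} = Ideal.map σ (Ideal.span {β}) by
        rw [Ideal.map_span, Set.image_singleton],
      hβ, Ideal.map_pow]
  rw [hβ, h15] at hspan
  set Qid : Ideal (𝓞 F) := Ideal.map σ w0 with hQiddef
  have hQc : Qid = Ideal.comap σ w0 := by
    apply le_antisymm
    · rw [Ideal.map_le_iff_le_comap]
      intro x hx
      simp only [Ideal.mem_comap, hσσ]
      exact hx
    · intro x hx
      rw [Ideal.mem_comap] at hx
      have h17 := Ideal.mem_map_of_mem σ hx
      rwa [hσσ] at h17
  have hQmax : Qid.IsMaximal := by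
    rw [hQc]
    exact Ideal.comap_isMaximal_of_surjective σ hσsurj
  have hle : Qid ^ (e * (N * m * 2)) ≤ w0 := by
    rw [pow_mul, ← hspan, ← pow_mul]
    exact Ideal.pow_le_self (by positivity)
  have hQw0 : Qid ≤ w0 := by
    haveI := hw0.isPrime
    exact (Ideal.IsPrime.pow_le_iff (by positivity)).mp hle
  have hfin : Qid = w0 := hQmax.eq_of_le hw0.ne_top hQw0
  rw [hQc] at hfin
  exact hsplit hfin
end

section
/- Let p ≥ 5 be prime and a ≥ 3. For any element g of PGL_2(F_{p^a}) of order 2, there exists h ∈ PSL_2(F_{p^a}) such that the element gh, lifted to GL_2(F̄_p), has eigenvalues α, β satisfying (α/β)^i ≠ −1 for all i = 1, …, 2p − 1. -/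
open Polynomial Matrix

lemma charpoly_fin_two' {R : Type*} [CommRing R] (M : Matrix (Fin 2) (Fin 2) R) :
    M.charpoly = X ^ 2 - C M.trace * X + C M.det := by
  rw [Matrix.charpoly, Matrix.det_fin_two, Matrix.charmatrix_apply_eq,
    Matrix.charmatrix_apply_eq, Matrix.charmatrix_apply_ne _ _ _ (by decide),
    Matrix.charmatrix_apply_ne _ _ _ (by decide), Matrix.trace_fin_two, Matrix.det_fin_two]
  simp only [map_add, map_sub, _root_.map_mul]
  ring

lemma exists_sl2_trace {K : Type*} [Field K] (G : Matrix (Fin 2) (Fin 2) K)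
    (hdet : G.det ≠ 0) (t : K) :
    ∃ h : Matrix.SpecialLinearGroup (Fin 2) K,
      (G * (h : Matrix (Fin 2) (Fin 2) K)).trace = t := by
  have htr : ∀ A : Matrix (Fin 2) (Fin 2) K,
      (G * A).trace = G 0 0 * A 0 0 + G 0 1 * A 1 0 + G 1 0 * A 0 1 + G 1 1 * A 1 1 := by
    intro A
    simp [Matrix.trace_fin_two, Matrix.mul_apply, Fin.sum_univ_two]
    ring
  by_cases h01 : G 0 1 ≠ 0
  · refine ⟨⟨!![1, 0; (t - G 0 0 - G 1 1) / G 0 1, 1], by simp [Matrix.det_fin_two_of]⟩, ?_⟩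
    rw [htr]
    simp only [Matrix.cons_val', Matrix.cons_val_zero, Matrix.cons_val_one, Matrix.head_cons,
      Matrix.head_fin_const, Matrix.empty_val', Matrix.cons_val_fin_one, Matrix.of_apply]
    field_simp
    ring
  by_cases h10 : G 1 0 ≠ 0
  · refine ⟨⟨!![1, (t - G 0 0 - G 1 1) / G 1 0; 0, 1], by simp [Matrix.det_fin_two_of]⟩, ?_⟩
    rw [htr]
    simp only [Matrix.cons_val', Matrix.cons_val_zero, Matrix.cons_val_one, Matrix.head_cons,
      Matrix.head_fin_const, Matrix.empty_val', Matrix.cons_val_fin_one, Matrix.of_apply]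
    field_simp
    ring
  · push_neg at h01 h10
    have h00 : G 0 0 ≠ 0 := by
      intro h
      rw [Matrix.det_fin_two, h01, h10, h] at hdet
      simp at hdet
    refine ⟨⟨!![t / G 0 0, 1; -1, 0], by simp [Matrix.det_fin_two_of]⟩, ?_⟩
    rw [htr, h01, h10]
    simp only [Matrix.cons_val', Matrix.cons_val_zero, Matrix.cons_val_one, Matrix.head_cons,
      Matrix.head_fin_const, Matrix.empty_val', Matrix.cons_val_fin_one, Matrix.of_apply]
    field_simp
    ring

lemma sum_Icc_two_mul (n : ℕ) : ∑ i ∈ Finset.Icc 1 n, 2 * i = n * (n + 1) := by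
  induction n with
  | zero => simp
  | succ n ih => rw [Finset.sum_Icc_succ_top (by omega), ih]; ring

/-- Let `p ≥ 5` be prime, `a ≥ 3`, and `K` a field with `p^a` elements.
For any element `g` of `PGL₂(K)` of order 2 (encoded as `g ∈ GL₂(K)` which is non-scalar
with `g²` scalar), there exists `h ∈ SL₂(K)` (whose class lies in `PSL₂(K)`) such that the
matrix `g·h`, viewed over the algebraic closure `K̄`, has eigenvalues `α, β` satisfying
`(α/β)^i ≠ -1` for all `i = 1, …, 2p-1`. -/
theorem stmt11 (p a : ℕ) [Fact p.Prime] (hp : 5 ≤ p) (ha : 3 ≤ a)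
    (K : Type*) [Field K] [Fintype K] [DecidableEq K] (hK : Fintype.card K = p ^ a)
    (g : GL (Fin 2) K)
    (hg_nonscalar : ∀ c : K, (g : Matrix (Fin 2) (Fin 2) K) ≠ c • (1 : Matrix (Fin 2) (Fin 2) K))
    (hg_sq_scalar : ∃ c : K, (g : Matrix (Fin 2) (Fin 2) K) ^ 2 = c • (1 : Matrix (Fin 2) (Fin 2) K)) :
    ∃ h : Matrix.SpecialLinearGroup (Fin 2) K,
      ∃ α β : AlgebraicClosure K,
        (((g : Matrix (Fin 2) (Fin 2) K) * (h : Matrix (Fin 2) (Fin 2) K)).map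
            (algebraMap K (AlgebraicClosure K))).charpoly =
          (Polynomial.X - Polynomial.C α) * (Polynomial.X - Polynomial.C β) ∧
        ∀ i : ℕ, 1 ≤ i → i ≤ 2 * p - 1 → (α / β) ^ i ≠ -1 := by
  classical
  set G := (g : Matrix (Fin 2) (Fin 2) K) with hG
  set d := G.det with hdd
  have hd : d ≠ 0 := ((Matrix.isUnit_iff_isUnit_det G).mp g.isUnit).ne_zero
  -- find a good α in K
  set P : Polynomial K :=
    X * ∏ i ∈ Finset.Icc 1 (2 * p - 1), (X ^ (2 * i) + C (d ^ i)) with hP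
  have hmon : P.Monic := by
    refine monic_X.mul (Polynomial.monic_prod_of_monic _ _ fun i hi => ?_)
    exact Polynomial.monic_X_pow_add_C _ (by
      have := (Finset.mem_Icc.mp hi).1; omega)
  have hdeg : P.natDegree < Fintype.card K := by
    have h1 : P.natDegree = 1 + ∑ i ∈ Finset.Icc 1 (2 * p - 1), 2 * i := by
      rw [hP, Polynomial.natDegree_mul (X_ne_zero) (by
        refine Polynomial.Monic.ne_zero (Polynomial.monic_prod_of_monic _ _ fun i hi => ?_)
        exact Polynomial.monic_X_pow_add_C _ (by
          have := (Finset.mem_Icc.mp hi).1; omega)),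
        Polynomial.natDegree_X, Polynomial.natDegree_prod _ _ (fun i hi => ?_)]
      · congr 1
        exact Finset.sum_congr rfl fun i hi => Polynomial.natDegree_X_pow_add_C
      · exact Polynomial.Monic.ne_zero (Polynomial.monic_X_pow_add_C _ (by
          have := (Finset.mem_Icc.mp hi).1; omega))
    have h2 : ∑ i ∈ Finset.Icc 1 (2 * p - 1), 2 * i = (2 * p - 1) * (2 * p) := by
      rw [sum_Icc_two_mul, show 2 * p - 1 + 1 = 2 * p from by omega]
    rw [h1, h2, hK]
    have hpa : p ^ 3 ≤ p ^ a := Nat.pow_le_pow_right (by omega) ha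
    have : 1 + (2 * p - 1) * (2 * p) < p ^ 3 := by
      obtain ⟨k, rfl⟩ : ∃ k, p = k + 5 := ⟨p - 5, by omega⟩
      rw [show 2 * (k + 5) - 1 = 2 * k + 9 from by omega]
      nlinarith [sq_nonneg k]
    omega
  obtain ⟨α, hα⟩ := P.exists_eval_ne_zero_of_natDegree_lt_card hmon.ne_zero (by
    rw [Cardinal.mk_fintype]; exact_mod_cast hdeg)
  rw [hP, Polynomial.eval_mul, Polynomial.eval_X, Polynomial.eval_prod] at hα
  have hα0 : α ≠ 0 := fun h => hα (by simp [h])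
  have hαi : ∀ i ∈ Finset.Icc 1 (2 * p - 1), α ^ (2 * i) + d ^ i ≠ 0 := by
    intro i hi hzero
    refine hα (mul_eq_zero_of_right _ (Finset.prod_eq_zero hi ?_))
    simpa using hzero
  -- build h
  set t : K := α + d / α with ht
  obtain ⟨h, hh⟩ := exists_sl2_trace G hd t
  set L := AlgebraicClosure K
  set φ := algebraMap K L with hφ
  have hinj : Function.Injective φ := φ.injective
  refine ⟨h, φ α, φ (d / α), ?_, ?_⟩
  · have hdet : (G * (h : Matrix (Fin 2) (Fin 2) K)).det = d := by
      rw [Matrix.det_mul, Matrix.SpecialLinearGroup.det_coe, mul_one]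
    rw [Matrix.charpoly_map, charpoly_fin_two', hh, hdet]
    have e1 : φ α * φ (d / α) = φ d := by
      rw [← _root_.map_mul]; congr 1; field_simp
    have e2 : φ t = φ α + φ (d / α) := by rw [ht, map_add]
    simp only [Polynomial.map_add, Polynomial.map_sub, Polynomial.map_mul,
      Polynomial.map_pow, Polynomial.map_X, Polynomial.map_C, ← e1, e2,
      Polynomial.C_add, Polynomial.C_mul]
    ring
  · intro i hi1 hi2 hcon
    have hβ0 : d / α ≠ 0 := div_ne_zero hd hα0
    have : φ α / φ (d / α) = φ (α ^ 2 / d) := by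
      rw [← map_div₀]; congr 1; field_simp
    rw [this, ← map_pow] at hcon
    have : (α ^ 2 / d) ^ i = -1 := by
      apply hinj; rw [hcon]; simp
    apply hαi i (Finset.mem_Icc.mpr ⟨hi1, hi2⟩)
    have hdi : d ^ i ≠ 0 := pow_ne_zero _ hd
    rw [div_pow, div_eq_iff hdi] at this
    rw [pow_mul, this]; ring
end
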